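/- Let p_j denote the j-th prime number. There exists an absolute constant C > 0 such that for all α in the interval (log 2/log 3, 1) and all integers r ≥ 4, ∏_{j=4}^{r} (1 − 2 p_j^{−α})^{−2} ≤ exp( (C/(1−α)) · r^{1−α} ). -/

import Mathlib

open MeasureTheory Filter Real

lemma sum_rpow_bound {α : ℝ} (hα0 : 0 < α) (hα1 : α < 1) :
    ∀ r : ℕ, 1 ≤ r → ∑ j ∈ Finset.Icc 1 r, (j : ℝ) ^ (-α) ≤ 2 / (1 - α) * (r : ℝ) ^ (1 - α) := by
  have hβ : 0 < 1 - α := by linarith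
  intro r hr
  induction r with
  | zero => omega
  | succ n ih =>
    rcases Nat.eq_or_lt_of_le hr with h | h
    · obtain rfl : n = 0 := by omega
      simp [Real.one_rpow]
      rw [le_div_iff₀ hβ]; linarith
    · have hn : 1 ≤ n := by omega
      have key : (2:ℝ) * ((n:ℝ)+1) ^ (-α) ≤ 2 / (1-α) * (((n:ℝ)+1) ^ (1-α) - (n:ℝ) ^ (1-α)) := by
        have hpos : (0:ℝ) < (n:ℝ) + 1 := by positivity
        have hber : ((n:ℝ)/((n:ℝ)+1)) ^ (1-α) ≤ 1 - (1-α)/((n:ℝ)+1) := by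
          have hs : (-1:ℝ) ≤ -(1/((n:ℝ)+1)) := by
            rw [neg_le_neg_iff]
            rw [div_le_one hpos]; linarith
          have := rpow_one_add_le_one_add_mul_self hs hβ.le (by linarith : 1 - α ≤ 1)
          have heq : (1:ℝ) + -(1/((n:ℝ)+1)) = (n:ℝ)/((n:ℝ)+1) := by field_simp; ring
          rw [heq] at this
          calc ((n:ℝ)/((n:ℝ)+1)) ^ (1-α) ≤ 1 + (1-α) * -(1/((n:ℝ)+1)) := this
            _ = 1 - (1-α)/((n:ℝ)+1) := by ring
        have hnsplit : (n:ℝ) ^ (1-α) = ((n:ℝ)+1) ^ (1-α) * ((n:ℝ)/((n:ℝ)+1)) ^ (1-α) := by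
          rw [← Real.mul_rpow (by positivity) (by positivity)]
          congr 1; field_simp
        have h2 : ((n:ℝ)+1) ^ (1-α) - (n:ℝ) ^ (1-α) ≥ (1-α) * ((n:ℝ)+1) ^ (-α) := by
          rw [hnsplit]
          have hppos : (0:ℝ) < ((n:ℝ)+1) ^ (1-α) := by positivity
          calc ((n:ℝ)+1) ^ (1-α) - ((n:ℝ)+1) ^ (1-α) * ((n:ℝ)/((n:ℝ)+1)) ^ (1-α)
              ≥ ((n:ℝ)+1) ^ (1-α) - ((n:ℝ)+1) ^ (1-α) * (1 - (1-α)/((n:ℝ)+1)) := by nlinarith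
            _ = ((n:ℝ)+1) ^ (1-α) * ((1-α)/((n:ℝ)+1)) := by ring
            _ = (1-α) * ((n:ℝ)+1) ^ (-α) := by
                rw [show (-α) = (1-α) + (-1) from by ring,
                  Real.rpow_add hpos, Real.rpow_neg_one]
                field_simp
        calc (2:ℝ) * ((n:ℝ)+1) ^ (-α) = 2/(1-α) * ((1-α) * ((n:ℝ)+1)^(-α)) := by
              field_simp
          _ ≤ 2/(1-α) * (((n:ℝ)+1)^(1-α) - (n:ℝ)^(1-α)) := by
              apply mul_le_mul_of_nonneg_left h2 (by positivity)
      have hsum : ∑ j ∈ Finset.Icc 1 (n+1), (j:ℝ)^(-α)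
          = (∑ j ∈ Finset.Icc 1 n, (j:ℝ)^(-α)) + ((n:ℝ)+1)^(-α) := by
        rw [Finset.sum_Icc_succ_top (by omega)]
        push_cast; ring_nf
      have hcast : ((n+1 : ℕ) : ℝ) = (n:ℝ) + 1 := by push_cast; ring
      rw [hsum, hcast]
      have := ih hn
      have htnn : (0:ℝ) ≤ ((n:ℝ)+1)^(-α) :=
        Real.rpow_nonneg (by positivity) (-α)
      linarith

/-- **Prime product bound.** Let `p_j` denote the `j`-th prime (`p_1 = 2`). There is an
absolute constant `C > 0` such that for all `α ∈ (log 2 / log 3, 1)` and all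
integers `r ≥ 4`, `∏_{j=4}^r (1 - 2 p_j^{-α})^{-2} ≤ exp((C/(1-α)) r^{1-α})`. -/
theorem stmt6 :
    ∃ C : ℝ, 0 < C ∧
      ∀ α : ℝ, Real.log 2 / Real.log 3 < α → α < 1 →
        ∀ r : ℕ, 4 ≤ r →
          ∏ j ∈ Finset.Icc 4 r,
              ((1 - 2 * (Nat.nth Nat.Prime (j - 1) : ℝ) ^ (-α))⁻¹) ^ 2
            ≤ Real.exp (C / (1 - α) * (r : ℝ) ^ (1 - α)) := by
  refine ⟨80, by norm_num, ?_⟩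
  intro α hαl hα1 r hr
  have hlog3 : (0:ℝ) < Real.log 3 := Real.log_pos (by norm_num)
  have hlog2 : (0:ℝ) < Real.log 2 := Real.log_pos (by norm_num)
  have hlog34 : Real.log 3 < 2 * Real.log 2 := by
    have h4 : Real.log 3 < Real.log 4 := Real.log_lt_log (by norm_num) (by norm_num)
    have : Real.log 4 = 2 * Real.log 2 := by
      rw [show (4:ℝ) = 2^2 by norm_num, Real.log_pow]; push_cast; ring
    linarith
  have hαhalf : (1:ℝ)/2 < α := by
    have : (1:ℝ)/2 ≤ Real.log 2 / Real.log 3 := by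
      rw [le_div_iff₀ hlog3]; linarith
    linarith
  have hα0 : 0 < α := by linarith
  have hβ : 0 < 1 - α := by linarith
  -- factor bound
  have factor : ∀ j ∈ Finset.Icc 4 r,
      ((1 - 2 * (Nat.nth Nat.Prime (j - 1) : ℝ) ^ (-α))⁻¹) ^ 2
        ≤ Real.exp (40 * (j:ℝ) ^ (-α)) := by
    intro j hj
    have hj4 : 4 ≤ j := (Finset.mem_Icc.1 hj).1
    set p : ℕ := Nat.nth Nat.Prime (j - 1) with hp
    have hpj : (j:ℝ) + 1 ≤ (p:ℝ) := by
      have := Nat.add_two_le_nth_prime (j - 1)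
      have : j + 1 ≤ p := by omega
      exact_mod_cast this
    have hjpos : (0:ℝ) < (j:ℝ) := by positivity
    have hp5 : (5:ℝ) ≤ (p:ℝ) := by
      have : (4:ℝ) ≤ (j:ℝ) := by exact_mod_cast hj4
      linarith
    have hp1 : (1:ℝ) < (p:ℝ) := by linarith
    set x : ℝ := 2 * (p:ℝ) ^ (-α) with hx
    have hxnn : 0 ≤ x := by positivity
    have hx910 : x ≤ 9/10 := by
      have h1 : (p:ℝ) ^ (-α) ≤ (p:ℝ) ^ (-(1/2:ℝ)) :=
        Real.rpow_le_rpow_of_exponent_le hp1.le (by linarith)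
      have h2 : (p:ℝ) ^ (-(1/2:ℝ)) ≤ (5:ℝ) ^ (-(1/2:ℝ)) :=
        Real.rpow_le_rpow_of_nonpos (by norm_num) hp5 (by norm_num)
      have h3 : (5:ℝ) ^ (-(1/2:ℝ)) ≤ 9/20 := by
        have ha : (20/9:ℝ) ≤ (5:ℝ) ^ ((1/2:ℝ)) := by
          rw [← Real.sqrt_eq_rpow]
          nlinarith [Real.sq_sqrt (by norm_num : (0:ℝ) ≤ 5), Real.sqrt_nonneg 5]
        have hb : (5:ℝ) ^ (-(1/2:ℝ)) = ((5:ℝ) ^ ((1/2:ℝ)))⁻¹ := by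
          rw [Real.rpow_neg (by norm_num : (0:ℝ) ≤ 5)]
        rw [hb]
        calc ((5:ℝ) ^ ((1/2:ℝ)))⁻¹ ≤ ((20:ℝ)/9)⁻¹ :=
              inv_anti₀ (by norm_num) ha
          _ = 9/20 := by norm_num
      rw [hx]; linarith
    have h1x : (1:ℝ)/10 ≤ 1 - x := by linarith
    have hpow : (p:ℝ) ^ (-α) ≤ (j:ℝ) ^ (-α) :=
      Real.rpow_le_rpow_of_nonpos hjpos (by linarith) (by linarith)
    have hinv : (1 - x)⁻¹ ≤ Real.exp (10 * x) := by
      have heq : (1 - x)⁻¹ = 1 + x / (1 - x) := by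
        field_simp; ring
      rw [heq]
      calc 1 + x / (1 - x) ≤ Real.exp (x / (1 - x)) := Real.add_one_le_exp _ |>.trans_eq' (by ring)
        _ ≤ Real.exp (10 * x) := by
            apply Real.exp_le_exp.2
            rw [div_le_iff₀ (by linarith)]
            nlinarith
    have hsq : ((1 - x)⁻¹) ^ 2 ≤ Real.exp (20 * x) := by
      calc ((1 - x)⁻¹) ^ 2 ≤ (Real.exp (10 * x)) ^ 2 := by
            apply pow_le_pow_left₀ (by positivity) hinv
        _ = Real.exp (20 * x) := by
            rw [sq, ← Real.exp_add]; ring_nf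
    calc ((1 - x)⁻¹) ^ 2 ≤ Real.exp (20 * x) := hsq
      _ ≤ Real.exp (40 * (j:ℝ) ^ (-α)) := by
          apply Real.exp_le_exp.2
          rw [hx]; linarith
  -- combine
  have hnonneg : ∀ j ∈ Finset.Icc 4 r,
      0 ≤ ((1 - 2 * (Nat.nth Nat.Prime (j - 1) : ℝ) ^ (-α))⁻¹) ^ 2 :=
    fun j _ => sq_nonneg _
  calc ∏ j ∈ Finset.Icc 4 r, ((1 - 2 * (Nat.nth Nat.Prime (j - 1) : ℝ) ^ (-α))⁻¹) ^ 2
      ≤ ∏ j ∈ Finset.Icc 4 r, Real.exp (40 * (j:ℝ) ^ (-α)) :=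
        Finset.prod_le_prod hnonneg factor
    _ = Real.exp (∑ j ∈ Finset.Icc 4 r, 40 * (j:ℝ) ^ (-α)) := (Real.exp_sum _ _).symm
    _ ≤ Real.exp (80 / (1 - α) * (r:ℝ) ^ (1 - α)) := by
        apply Real.exp_le_exp.2
        have hsub : ∑ j ∈ Finset.Icc 4 r, 40 * (j:ℝ) ^ (-α)
            ≤ ∑ j ∈ Finset.Icc 1 r, 40 * (j:ℝ) ^ (-α) := by
          apply Finset.sum_le_sum_of_subset_of_nonneg
          · apply Finset.Icc_subset_Icc_left; omega
          · intro i _ _; positivity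
        have := sum_rpow_bound hα0 hα1 r (by omega)
        rw [← Finset.mul_sum] at hsub ⊢
        calc 40 * ∑ j ∈ Finset.Icc 4 r, (j:ℝ) ^ (-α)
            ≤ 40 * ∑ j ∈ Finset.Icc 1 r, (j:ℝ) ^ (-α) := by
              rw [← Finset.mul_sum] at hsub; exact hsub
          _ ≤ 40 * (2 / (1 - α) * (r:ℝ) ^ (1 - α)) := by linarith
          _ = 80 / (1 - α) * (r:ℝ) ^ (1 - α) := by field_simp; ring
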